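/- For any two-qubit state ρ and qubit observables A₀, A₁, B₀, B₁ with ‖A_x‖,‖B_y‖ ≤ 1, the Mermin operators satisfy ⟨A₀B₀ − A₁B₁⟩ ≤ 2 and (⟨A₀B₀−A₁B₁⟩)² + (⟨A₀B₁+A₁B₀⟩)² ≤ 4; in particular for any signs s,t ∈ {−1,+1}, s·⟨A₀B₀−A₁B₁⟩ + t·⟨A₀B₁+A₁B₀⟩ ≤ 2√2. -/

import Mathlib

open Matrix Kronecker
open scoped ComplexOrder

section Aux

set_option linter.unusedSectionVars false

variable {n m : Type*} [Fintype n] [DecidableEq n] [Fintype m] [DecidableEq m]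

open scoped MatrixOrder in
lemma psd_sqrt_exists {ρ : Matrix n n ℂ} (hρ : ρ.PosSemidef) :
    ∃ r : Matrix n n ℂ, r.PosSemidef ∧ r * r = ρ :=
  ⟨CFC.sqrt ρ, (CFC.sqrt_nonneg ρ).posSemidef, CFC.sqrt_mul_sqrt_self ρ hρ.nonneg⟩

lemma kron_conjT (A : Matrix n n ℂ) (B : Matrix m m ℂ) :
    (A ⊗ₖ B)ᴴ = Aᴴ ⊗ₖ Bᴴ := by
  ext ⟨i, j⟩ ⟨k, l⟩
  simp [conjTranspose_apply, kroneckerMap_apply, star_mul']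

lemma trace_nonneg_of_psd {P : Matrix n n ℂ} (hP : P.PosSemidef) :
    0 ≤ P.trace := by
  rw [Matrix.trace]
  apply Finset.sum_nonneg
  intro i _
  have := hP.dotProduct_mulVec_nonneg (Pi.single i 1)
  simpa [dotProduct, Pi.single_apply, Matrix.mulVec, apply_ite, diag] using this

lemma trace_mul_psd_nonneg {ρ S : Matrix n n ℂ} (hρ : ρ.PosSemidef) (hS : S.PosSemidef) :
    0 ≤ ((ρ * S).trace).re := by
  obtain ⟨r, hrpsd, hr2⟩ := psd_sqrt_exists hρ
  have hrH : rᴴ = r := hrpsd.1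
  have h1 : (ρ * S).trace = (rᴴ * S * r).trace := by
    rw [hrH, ← hr2, Matrix.mul_assoc, Matrix.trace_mul_comm r (r * S), Matrix.mul_assoc]
  rw [h1]
  have := trace_nonneg_of_psd (hS.conjTranspose_mul_mul_same r)
  exact (Complex.le_def.mp this).1

/-- Cauchy–Schwarz for the Frobenius pairing. -/
lemma trace_cs (U V : Matrix n n ℂ) :
    ‖(Uᴴ * V).trace‖ ^ 2 ≤ ((Uᴴ * U).trace).re * ((Vᴴ * V).trace).re := by
  have key : ∀ X Y : Matrix n n ℂ,
      (∑ p : n × n, (starRingEnd ℂ) (X p.1 p.2) * Y p.1 p.2) = (Xᴴ * Y).trace := by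
    intro X Y
    rw [Fintype.sum_prod_type, Matrix.trace, Finset.sum_comm]
    refine Finset.sum_congr rfl fun j _ => ?_
    simp [Matrix.mul_apply, conjTranspose_apply, diag]
  let u : EuclideanSpace ℂ (n × n) := WithLp.toLp 2 (fun p : n × n => U p.1 p.2)
  let v : EuclideanSpace ℂ (n × n) := WithLp.toLp 2 (fun p : n × n => V p.1 p.2)
  have hiuv : (inner ℂ u v : ℂ) = (Uᴴ * V).trace := by
    rw [PiLp.inner_apply]
    rw [← key U V]
    refine Finset.sum_congr rfl fun p _ => ?_
    simp [u, v, mul_comm]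
  have hiuu : (inner ℂ u u : ℂ) = (Uᴴ * U).trace := by
    rw [PiLp.inner_apply]
    rw [← key U U]
    refine Finset.sum_congr rfl fun p _ => ?_
    simp [u, mul_comm, Complex.mul_conj']
  have hivv : (inner ℂ v v : ℂ) = (Vᴴ * V).trace := by
    rw [PiLp.inner_apply]
    rw [← key V V]
    refine Finset.sum_congr rfl fun p _ => ?_
    simp [v, mul_comm, Complex.mul_conj']
  calc ‖(Uᴴ * V).trace‖ ^ 2 = ‖(inner ℂ u v : ℂ)‖ ^ 2 := by
        rw [hiuv]
    _ ≤ (‖u‖ * ‖v‖) ^ 2 :=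
        pow_le_pow_left₀ (norm_nonneg _) (norm_inner_le_norm (𝕜 := ℂ) u v) 2
    _ = ‖u‖ ^ 2 * ‖v‖ ^ 2 := by ring
    _ = ((Uᴴ * U).trace).re * ((Vᴴ * V).trace).re := by
        rw [← inner_self_eq_norm_sq (𝕜 := ℂ) u, ← inner_self_eq_norm_sq (𝕜 := ℂ) v,
          hiuu, hivv, RCLike.re_to_complex, RCLike.re_to_complex]

/-- Cauchy–Schwarz with a state. -/
lemma cs_rho {ρ : Matrix n n ℂ} (hρ : ρ.PosSemidef) (P Q : Matrix n n ℂ) :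
    ‖(ρ * P * Q).trace‖ ^ 2
      ≤ ((ρ * (P * Pᴴ)).trace).re * ((ρ * (Qᴴ * Q)).trace).re := by
  obtain ⟨r, hrpsd, hr2⟩ := psd_sqrt_exists hρ
  have hrH : rᴴ = r := hrpsd.1
  have cyc : ∀ W : Matrix n n ℂ, (ρ * W).trace = (r * W * r).trace := by
    intro W
    rw [← hr2, Matrix.mul_assoc, Matrix.trace_mul_comm r (r * W), Matrix.mul_assoc]
  have h0 : (ρ * P * Q).trace = (((Pᴴ * r)ᴴ) * (Q * r)).trace := by
    rw [conjTranspose_mul, conjTranspose_conjTranspose, hrH, Matrix.mul_assoc ρ P Q, cyc (P * Q)]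
    simp only [Matrix.mul_assoc]
  have h1 : ((Pᴴ * r)ᴴ * (Pᴴ * r)).trace = (ρ * (P * Pᴴ)).trace := by
    rw [conjTranspose_mul, conjTranspose_conjTranspose, hrH, cyc (P * Pᴴ)]
    simp only [Matrix.mul_assoc]
  have h2 : ((Q * r)ᴴ * (Q * r)).trace = (ρ * (Qᴴ * Q)).trace := by
    rw [conjTranspose_mul, hrH, cyc (Qᴴ * Q)]
    simp only [Matrix.mul_assoc]
  rw [h0, ← h1, ← h2]
  exact trace_cs (Pᴴ * r) (Q * r)

lemma psd_kron_psd {K : Matrix n n ℂ} {L : Matrix m m ℂ}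
    (hK : K.PosSemidef) (hL : L.PosSemidef) : (K ⊗ₖ L).PosSemidef := by
  obtain ⟨rK, hrK, hK2⟩ := psd_sqrt_exists hK
  obtain ⟨rL, hrL, hL2⟩ := psd_sqrt_exists hL
  have hH : (rK ⊗ₖ rL)ᴴ = rK ⊗ₖ rL := by
    rw [kron_conjT, hrK.1.eq, hrL.1.eq]
  have h := posSemidef_conjTranspose_mul_self (rK ⊗ₖ rL)
  rwa [hH, ← Matrix.mul_kronecker_mul, hK2, hL2] at h

lemma herm_trace_im {ρ C : Matrix n n ℂ} (hρ : ρ.IsHermitian) (hC : C.IsHermitian) :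
    ((ρ * C).trace).im = 0 := by
  have h : star ((ρ * C).trace) = (ρ * C).trace := by
    rw [← Matrix.trace_conjTranspose, conjTranspose_mul, hρ.eq, hC.eq, Matrix.trace_mul_comm]
  have h2 := congrArg Complex.im h
  simp only [Complex.star_def, Complex.conj_im] at h2
  linarith

lemma one_sub_sq_psd {A : Matrix n n ℂ} (h1 : (1 - A).PosSemidef) (h2 : (1 + A).PosSemidef) :
    (1 - A * A).PosSemidef := by
  have hA1 : (1 - A)ᴴ = 1 - A := h1.1
  have hA2 : (1 + A)ᴴ = 1 + A := h2.1
  have T1 := h2.conjTranspose_mul_mul_same (1 - A)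
  have T2 := h1.conjTranspose_mul_mul_same (1 + A)
  have hsum := T1.add T2
  rw [hA1, hA2] at hsum
  have key : (1 - A) * (1 + A) * (1 - A) + (1 + A) * (1 - A) * (1 + A)
      = (1 - A * A) + (1 - A * A) := by noncomm_ring
  rw [key] at hsum
  have hAh : Aᴴ = A := by
    have h := h1.1.eq
    rw [conjTranspose_sub, conjTranspose_one] at h
    exact sub_right_injective h
  refine Matrix.PosSemidef.of_dotProduct_mulVec_nonneg ?_ ?_
  · show (1 - A * A)ᴴ = 1 - A * A
    rw [conjTranspose_sub, conjTranspose_one, conjTranspose_mul, hAh]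
  · intro x
    have h4 := hsum.dotProduct_mulVec_nonneg x
    rw [Matrix.add_mulVec, dotProduct_add] at h4
    have h5 : (0 : ℂ) ≤ star x ⬝ᵥ ((1 - A * A) *ᵥ x) + star x ⬝ᵥ ((1 - A * A) *ᵥ x) := h4
    rw [Complex.le_def] at h5 ⊢
    constructor
    · have := h5.1
      simp only [Complex.add_re, Complex.zero_re] at this ⊢
      linarith
    · have := h5.2
      simp only [Complex.add_im, Complex.zero_im] at this ⊢
      linarith

end Aux

set_option maxHeartbeats 1000000 in
/-- Bounds on the Mermin operators `A₀B₀ - A₁B₁` and `A₀B₁ + A₁B₀` for any two-qubit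
state and dichotomic observables of operator norm at most 1. -/
theorem mermin_operator_bounds
    (ρ : Matrix (Fin 2 × Fin 2) (Fin 2 × Fin 2) ℂ)
    (hρ : ρ.PosSemidef) (hρtr : ρ.trace = 1)
    (A B : Fin 2 → Matrix (Fin 2) (Fin 2) ℂ)
    (hA : ∀ x, (A x).IsHermitian) (hB : ∀ y, (B y).IsHermitian)
    (hA1 : ∀ x, (1 - A x).PosSemidef) (hA2 : ∀ x, (1 + A x).PosSemidef)
    (hB1 : ∀ y, (1 - B y).PosSemidef) (hB2 : ∀ y, (1 + B y).PosSemidef)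
    (M M' : ℝ)
    (hM : M = (Matrix.trace (ρ * (A 0 ⊗ₖ B 0 - A 1 ⊗ₖ B 1))).re)
    (hM' : M' = (Matrix.trace (ρ * (A 0 ⊗ₖ B 1 + A 1 ⊗ₖ B 0))).re) :
    M ≤ 2 ∧ M ^ 2 + M' ^ 2 ≤ 4 ∧
      ∀ s t : ℝ, (s = 1 ∨ s = -1) → (t = 1 ∨ t = -1) →
        s * M + t * M' ≤ 2 * Real.sqrt 2 := by
  set X : Matrix (Fin 2) (Fin 2) ℂ := A 0 + Complex.I • A 1 with hX
  set Y : Matrix (Fin 2) (Fin 2) ℂ := B 0 + Complex.I • B 1 with hY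
  have hXH : Xᴴ = A 0 + (-Complex.I) • A 1 := by
    rw [hX, conjTranspose_add, conjTranspose_smul, (hA 0).eq, (hA 1).eq, Complex.star_def,
      Complex.conj_I]
  have hYH : Yᴴ = B 0 + (-Complex.I) • B 1 := by
    rw [hY, conjTranspose_add, conjTranspose_smul, (hB 0).eq, (hB 1).eq, Complex.star_def,
      Complex.conj_I]
  -- the complex Mermin operator
  set C : Matrix (Fin 2 × Fin 2) (Fin 2 × Fin 2) ℂ := A 0 ⊗ₖ B 0 - A 1 ⊗ₖ B 1 with hC
  set D : Matrix (Fin 2 × Fin 2) (Fin 2 × Fin 2) ℂ := A 0 ⊗ₖ B 1 + A 1 ⊗ₖ B 0 with hD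
  have key1 : X ⊗ₖ Y = C + Complex.I • D := by
    rw [hX, hY, hC, hD]
    simp only [add_kronecker, kronecker_add, smul_kronecker, kronecker_smul, smul_smul,
      Complex.I_mul_I, neg_smul, one_smul, smul_add]
    module
  set z : ℂ := (ρ * (X ⊗ₖ Y)).trace with hz
  have hCherm : C.IsHermitian := by
    show Cᴴ = C
    rw [hC, conjTranspose_sub, kron_conjT, kron_conjT, (hA 0).eq, (hA 1).eq, (hB 0).eq,
      (hB 1).eq]
  have hDherm : D.IsHermitian := by
    show Dᴴ = D
    rw [hD, conjTranspose_add, kron_conjT, kron_conjT, (hA 0).eq, (hA 1).eq, (hB 0).eq,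
      (hB 1).eq]
  have hzsplit : z = (ρ * C).trace + Complex.I * (ρ * D).trace := by
    rw [hz, key1, Matrix.mul_add, Matrix.trace_add, Matrix.mul_smul, Matrix.trace_smul,
      smul_eq_mul]
  have himC : ((ρ * C).trace).im = 0 := herm_trace_im hρ.1 hCherm
  have himD : ((ρ * D).trace).im = 0 := herm_trace_im hρ.1 hDherm
  have hzre : z.re = M := by
    rw [hzsplit, hM]
    simp [Complex.add_re, Complex.mul_re, himD]
  have hzim : z.im = M' := by
    rw [hzsplit, hM']
    simp [Complex.add_im, Complex.mul_im, himC]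
  have habs : ‖z‖ ^ 2 = M ^ 2 + M' ^ 2 := by
    rw [Complex.sq_norm, Complex.normSq_apply, hzre, hzim]
    ring
  -- the four Cauchy–Schwarz quantities
  set a : ℝ := ((ρ * ((X * Xᴴ) ⊗ₖ (1 : Matrix (Fin 2) (Fin 2) ℂ))).trace).re with ha
  set a' : ℝ := ((ρ * ((Xᴴ * X) ⊗ₖ (1 : Matrix (Fin 2) (Fin 2) ℂ))).trace).re with ha'
  set b : ℝ := ((ρ * ((1 : Matrix (Fin 2) (Fin 2) ℂ) ⊗ₖ (Yᴴ * Y))).trace).re with hb'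
  set b' : ℝ := ((ρ * ((1 : Matrix (Fin 2) (Fin 2) ℂ) ⊗ₖ (Y * Yᴴ))).trace).re with hb''
  have one_psd : (1 : Matrix (Fin 2) (Fin 2) ℂ).PosSemidef := Matrix.PosSemidef.one
  have ha0 : 0 ≤ a :=
    trace_mul_psd_nonneg hρ (psd_kron_psd (posSemidef_self_mul_conjTranspose X) one_psd)
  have ha0' : 0 ≤ a' :=
    trace_mul_psd_nonneg hρ (psd_kron_psd (posSemidef_conjTranspose_mul_self X) one_psd)
  have hb0 : 0 ≤ b :=
    trace_mul_psd_nonneg hρ (psd_kron_psd one_psd (posSemidef_conjTranspose_mul_self Y))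
  have hb0' : 0 ≤ b' :=
    trace_mul_psd_nonneg hρ (psd_kron_psd one_psd (posSemidef_self_mul_conjTranspose Y))
  -- first Cauchy–Schwarz
  have cs1 : M ^ 2 + M' ^ 2 ≤ a * b := by
    have e : ρ * (X ⊗ₖ Y) = ρ * (X ⊗ₖ (1 : Matrix (Fin 2) (Fin 2) ℂ))
        * ((1 : Matrix (Fin 2) (Fin 2) ℂ) ⊗ₖ Y) := by
      rw [Matrix.mul_assoc, ← Matrix.mul_kronecker_mul, mul_one, one_mul]
    have h := cs_rho hρ (X ⊗ₖ (1 : Matrix (Fin 2) (Fin 2) ℂ))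
      ((1 : Matrix (Fin 2) (Fin 2) ℂ) ⊗ₖ Y)
    rw [kron_conjT, kron_conjT, conjTranspose_one, ← Matrix.mul_kronecker_mul,
      ← Matrix.mul_kronecker_mul, mul_one, ← e] at h
    rw [← habs]
    exact h
  -- second Cauchy–Schwarz, on the conjugated operator
  have cs2 : M ^ 2 + M' ^ 2 ≤ a' * b' := by
    have hzc : (ρ * (Xᴴ ⊗ₖ Yᴴ)).trace = star z := by
      rw [hz, ← Matrix.trace_conjTranspose, conjTranspose_mul, kron_conjT, hρ.1.eq,
        Matrix.trace_mul_comm]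
    have e : ρ * (Xᴴ ⊗ₖ Yᴴ) = ρ * (Xᴴ ⊗ₖ (1 : Matrix (Fin 2) (Fin 2) ℂ))
        * ((1 : Matrix (Fin 2) (Fin 2) ℂ) ⊗ₖ Yᴴ) := by
      rw [Matrix.mul_assoc, ← Matrix.mul_kronecker_mul, mul_one, one_mul]
    have h := cs_rho hρ (Xᴴ ⊗ₖ (1 : Matrix (Fin 2) (Fin 2) ℂ))
      ((1 : Matrix (Fin 2) (Fin 2) ℂ) ⊗ₖ Yᴴ)
    rw [kron_conjT, kron_conjT, conjTranspose_one, conjTranspose_conjTranspose,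
      conjTranspose_conjTranspose, ← Matrix.mul_kronecker_mul, ← Matrix.mul_kronecker_mul, mul_one, ← e, hzc] at h
    rw [← habs]
    have : ‖star z‖ = ‖z‖ := Complex.norm_conj z
    rw [this] at h
    exact h
  -- bound a + a' ≤ 4
  have haa : a + a' ≤ 4 := by
    set SA : Matrix (Fin 2) (Fin 2) ℂ :=
      (1 - A 0 * A 0) + (1 - A 1 * A 1) + ((1 - A 0 * A 0) + (1 - A 1 * A 1)) with hSA
    have hSApsd : SA.PosSemidef :=
      ((one_sub_sq_psd (hA1 0) (hA2 0)).add (one_sub_sq_psd (hA1 1) (hA2 1))).add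
        ((one_sub_sq_psd (hA1 0) (hA2 0)).add (one_sub_sq_psd (hA1 1) (hA2 1)))
    have hXsum : X * Xᴴ + Xᴴ * X + SA = (4 : ℂ) • 1 := by
      rw [hXH, hX, hSA]
      simp only [Matrix.add_mul, Matrix.mul_add, Matrix.smul_mul, Matrix.mul_smul, smul_smul,
        mul_neg, neg_mul, Complex.I_mul_I, neg_neg, neg_smul, one_smul]
      match_scalars <;> (try ring1) <;> (simp [Complex.I_sq]; try ring1)
    have hsum : ((ρ * ((X * Xᴴ) ⊗ₖ (1 : Matrix (Fin 2) (Fin 2) ℂ))).trace)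
        + ((ρ * ((Xᴴ * X) ⊗ₖ (1 : Matrix (Fin 2) (Fin 2) ℂ))).trace)
        + ((ρ * (SA ⊗ₖ (1 : Matrix (Fin 2) (Fin 2) ℂ))).trace) = 4 := by
      rw [← Matrix.trace_add, ← Matrix.trace_add, ← Matrix.mul_add, ← Matrix.mul_add,
        ← add_kronecker, ← add_kronecker, hXsum, smul_kronecker, one_kronecker_one,
        Matrix.mul_smul, Matrix.trace_smul, Matrix.mul_one, hρtr]
      simp
    have h4 := congrArg Complex.re hsum
    simp only [Complex.add_re] at h4
    have hnn := trace_mul_psd_nonneg hρ (psd_kron_psd hSApsd one_psd)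
    rw [ha, ha']
    norm_num at h4
    linarith
  -- bound b + b' ≤ 4
  have hbb : b + b' ≤ 4 := by
    set SB : Matrix (Fin 2) (Fin 2) ℂ :=
      (1 - B 0 * B 0) + (1 - B 1 * B 1) + ((1 - B 0 * B 0) + (1 - B 1 * B 1)) with hSB
    have hSBpsd : SB.PosSemidef :=
      ((one_sub_sq_psd (hB1 0) (hB2 0)).add (one_sub_sq_psd (hB1 1) (hB2 1))).add
        ((one_sub_sq_psd (hB1 0) (hB2 0)).add (one_sub_sq_psd (hB1 1) (hB2 1)))
    have hYsum : Yᴴ * Y + Y * Yᴴ + SB = (4 : ℂ) • 1 := by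
      rw [hYH, hY, hSB]
      simp only [Matrix.add_mul, Matrix.mul_add, Matrix.smul_mul, Matrix.mul_smul, smul_smul,
        mul_neg, neg_mul, Complex.I_mul_I, neg_neg, neg_smul, one_smul]
      match_scalars <;> (try ring1) <;> (simp [Complex.I_sq]; try ring1)
    have hsum : ((ρ * ((1 : Matrix (Fin 2) (Fin 2) ℂ) ⊗ₖ (Yᴴ * Y))).trace)
        + ((ρ * ((1 : Matrix (Fin 2) (Fin 2) ℂ) ⊗ₖ (Y * Yᴴ))).trace)
        + ((ρ * ((1 : Matrix (Fin 2) (Fin 2) ℂ) ⊗ₖ SB)).trace) = 4 := by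
      rw [← Matrix.trace_add, ← Matrix.trace_add, ← Matrix.mul_add, ← Matrix.mul_add,
        ← kronecker_add, ← kronecker_add, hYsum, kronecker_smul, one_kronecker_one,
        Matrix.mul_smul, Matrix.trace_smul, Matrix.mul_one, hρtr]
      simp
    have h4 := congrArg Complex.re hsum
    simp only [Complex.add_re] at h4
    have hnn := trace_mul_psd_nonneg hρ (psd_kron_psd one_psd hSBpsd)
    rw [hb', hb'']
    norm_num at h4
    linarith
  -- numeric endgame
  have ht0 : 0 ≤ M ^ 2 + M' ^ 2 := by positivity
  have hsq : (M ^ 2 + M' ^ 2) ^ 2 ≤ (a * b) * (a' * b') := by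
    nlinarith [mul_nonneg ha0 hb0, mul_nonneg ha0' hb0']
  have hA4 : a * a' ≤ 4 := by nlinarith [sq_nonneg (a - a')]
  have hB4 : b * b' ≤ 4 := by nlinarith [sq_nonneg (b - b')]
  have h16 : (M ^ 2 + M' ^ 2) ^ 2 ≤ 16 := by
    nlinarith [mul_nonneg ha0 ha0', mul_nonneg hb0 hb0']
  have hM4 : M ^ 2 + M' ^ 2 ≤ 4 := by nlinarith
  have keysqrt : ∀ u v : ℝ, u ^ 2 + v ^ 2 ≤ 4 → u + v ≤ 2 * Real.sqrt 2 := by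
    intro u v huv
    have hs : Real.sqrt 2 ^ 2 = 2 := Real.sq_sqrt (by norm_num)
    have hs0 : 0 < Real.sqrt 2 := Real.sqrt_pos.mpr (by norm_num)
    nlinarith [sq_nonneg (u - v), sq_nonneg (u + v - 2 * Real.sqrt 2)]
  refine ⟨by nlinarith, hM4, ?_⟩
  rintro s t (rfl | rfl) (rfl | rfl)
  · have := keysqrt M M' hM4
    linarith
  · have := keysqrt M (-M') (by nlinarith)
    linarith
  · have := keysqrt (-M) M' (by nlinarith)
    linarith
  · have := keysqrt (-M) (-M') (by nlinarith)
    linarith
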